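/- (Upper bound for the radius in the convex case with b₁ = 0.) Fix k ∈ [0,1). Let φ(z) = h(z) = 1/(1−z) on 𝔻 and let g be analytic on 𝔻 with g(0) = 0 and g'(z) = k z h'(z). Then φ is univalent with convex image, h ≺ φ, |g'(z)| ≤ k|h'(z)| on 𝔻, g'(0) = 0, dist(φ(0), ∂φ(𝔻)) = 1/2, the Taylor coefficients satisfy |a_n| = 1 for n ≥ 1 and |b_n| = k(n−1)/n for n ≥ 2, and for every r ∈ (0,1), ∑_{n=1}^∞ |a_n| r^n + ∑_{n=2}^∞ |b_n| r^n = (1+k)r/(1−r) + k·log(1−r); in particular this sum exceeds 1/2 whenever R < r < 1, where R ∈ (0,1) is the root of 2(1+k)R/(1−R) + 2k·log(1−R) = 1. -/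

import Mathlib

open Complex Metric Set ENNReal

noncomputable section

/-- The open unit disk in the complex plane. -/
def unitDisk : Set ℂ := Metric.ball 0 1

/-- `h` is subordinate to `φ` on the unit disk: `h = φ ∘ ω` for some analytic
self-map `ω` of the unit disk fixing the origin. -/
def Subordinate (h φ : ℂ → ℂ) : Prop :=
  ∃ ω : ℂ → ℂ, AnalyticOnNhd ℂ ω unitDisk ∧ ω 0 = 0 ∧
    Set.MapsTo ω unitDisk unitDisk ∧ ∀ z ∈ unitDisk, h z = φ (ω z)

lemma mem_unitDisk {z : ℂ} : z ∈ unitDisk ↔ ‖z‖ < 1 := mem_ball_zero_iff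

lemma coeff_eq_zero (c : ℕ → ℂ)
    (hc : ∀ z ∈ unitDisk, HasSum (fun n => c n * z ^ n) 0) : ∀ n, c n = 0 := by
  set p := FormalMultilinearSeries.ofScalars ℂ c with hp
  have hsummable : Summable (fun n => ‖p n‖ * ((1/2 : NNReal) : ℝ) ^ n) := by
    have h2 : ((1/2 : ℂ)) ∈ unitDisk := by
      rw [mem_unitDisk]; norm_num
    have := (hc _ h2).summable.norm
    refine this.congr fun n => ?_
    rw [FormalMultilinearSeries.ofScalars_norm]
    simp [norm_mul, norm_pow]
  have hrad : ((1/2 : NNReal) : ℝ≥0∞) ≤ p.radius := p.le_radius_of_summable hsummable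
  have hball : HasFPowerSeriesOnBall (0 : ℂ → ℂ) p 0 ((1/2 : NNReal) : ℝ≥0∞) := by
    refine ⟨hrad, by norm_num, ?_⟩
    intro y hy
    rw [Metric.emetric_ball_nnreal] at hy
    have hy1 : y ∈ unitDisk := by
      rw [mem_unitDisk]
      have := mem_ball_zero_iff.mp hy
      have h12 : ((1/2 : NNReal) : ℝ) = 1/2 := by norm_num
      rw [h12] at this
      linarith
    have hsum := hc y hy1
    simp only [Pi.zero_apply, zero_add]
    refine HasSum.congr_fun hsum fun n => ?_
    rw [hp, FormalMultilinearSeries.ofScalars_apply_eq, smul_eq_mul]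
  have hz : p = 0 := hball.hasFPowerSeriesAt.eq_zero
  intro n
  exact (FormalMultilinearSeries.ofScalars_eq_zero ℂ n).mp (by rw [← hp, hz]; rfl)

lemma coeff_unique {c d : ℕ → ℂ} {f : ℂ → ℂ}
    (hc : ∀ z ∈ unitDisk, HasSum (fun n => c n * z ^ n) (f z))
    (hd : ∀ z ∈ unitDisk, HasSum (fun n => d n * z ^ n) (f z)) : ∀ n, c n = d n := by
  intro n
  have := coeff_eq_zero (fun n => c n - d n) (fun z hz => by
    simpa [sub_mul] using (hc z hz).sub (hd z hz)) n
  exact sub_eq_zero.mp this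

lemma one_sub_ne {z : ℂ} (hz : ‖z‖ < 1) : (1:ℂ) - z ≠ 0 := by
  intro h
  have : z = 1 := by linear_combination -h
  rw [this] at hz; simp at hz

def Gfun (k : ℝ) : ℂ → ℂ := fun z => (k:ℂ) * (z * (1-z)⁻¹) + (k:ℂ) * Complex.log (1-z)

lemma hasDerivAt_inv_one_sub {z : ℂ} (hz : (1:ℂ) - z ≠ 0) :
    HasDerivAt (fun w : ℂ => (1-w)⁻¹) (((1-z)^2)⁻¹) z := by
  have h1 : HasDerivAt (fun w : ℂ => 1 - w) (-1) z := (hasDerivAt_id z).const_sub 1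
  have := h1.inv hz
  refine this.congr_deriv ?_
  field_simp

lemma hasDerivAt_G (k : ℝ) {z : ℂ} (hz : ‖z‖ < 1) :
    HasDerivAt (Gfun k) ((k:ℂ)*z*((1-z)^2)⁻¹) z := by
  have hne := one_sub_ne hz
  have hslit : (1:ℂ) - z ∈ Complex.slitPlane := by
    have : ‖-z‖ < 1 := by simpa using hz
    simpa [sub_eq_add_neg] using Complex.mem_slitPlane_of_norm_lt_one this
  have h1 : HasDerivAt (fun w : ℂ => 1 - w) (-1) z := (hasDerivAt_id z).const_sub 1
  have hlog : HasDerivAt (fun w : ℂ => Complex.log (1 - w)) ((1-z)⁻¹ * (-1)) z :=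
    (Complex.hasDerivAt_log hslit).comp z h1
  have hmul : HasDerivAt (fun w : ℂ => w * (1-w)⁻¹)
      (1 * (1-z)⁻¹ + z * ((1-z)^2)⁻¹) z :=
    (hasDerivAt_id z).mul (hasDerivAt_inv_one_sub hne)
  have := (hmul.const_mul ((k:ℂ))).add (hlog.const_mul ((k:ℂ)))
  refine this.congr_deriv ?_
  field_simp
  ring

lemma hasSum_Gfun (k : ℝ) {z : ℂ} (hz : ‖z‖ < 1) :
    HasSum (fun n : ℕ => (k:ℂ)*((n:ℂ)-1)/n * z^n) (Gfun k z) := by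
  have hne := one_sub_ne hz
  have hgeo : HasSum (fun n : ℕ => z ^ (n+1)) (z * (1-z)⁻¹) := by
    exact HasSum.congr_fun ((hasSum_geometric_of_norm_lt_one hz).mul_left z)
      (fun n => by ring)
  have hlog : HasSum (fun n : ℕ => z ^ (n+1) / (n+1)) (-Complex.log (1 - z)) := by
    have h0 := Complex.hasSum_taylorSeries_neg_log hz
    have h1 := (hasSum_nat_add_iff' (f := fun n : ℕ => z ^ n / n) 1).mpr h0
    have h1'' : HasSum (fun n : ℕ => z ^ (n+1) / ((n+1:ℕ):ℂ)) (-Complex.log (1-z)) := by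
      rw [show (-Complex.log (1-z)) = -Complex.log (1-z) - ∑ i ∈ Finset.range 1, z ^ i / (i:ℂ) by simp]
      exact h1
    exact HasSum.congr_fun h1'' (fun n => by norm_cast)
  have hmain := (hgeo.mul_left ((k:ℂ))).sub (hlog.mul_left ((k:ℂ)))
  have : HasSum (fun n : ℕ => (k:ℂ)*((n+1:ℂ)-1)/(n+1) * z^(n+1))
      ((k:ℂ) * (z * (1-z)⁻¹) - (k:ℂ) * (-Complex.log (1-z))) := by
    refine HasSum.congr_fun hmain fun n => ?_
    have hn1 : ((n:ℂ)+1) ≠ 0 := Nat.cast_add_one_ne_zero n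
    push_cast
    field_simp
  refine (hasSum_nat_add_iff' (f := fun n : ℕ => (k:ℂ)*((n:ℂ)-1)/n * z^n) 1).mp ?_
  have hv : Gfun k z - ∑ i ∈ Finset.range 1, (k:ℂ)*((i:ℂ)-1)/i * z^i
      = (k:ℂ) * (z * (1-z)⁻¹) - (k:ℂ) * (-Complex.log (1-z)) := by
    simp only [Finset.range_one, Finset.sum_singleton, Nat.cast_zero, Gfun]
    norm_num
  rw [hv]
  exact HasSum.congr_fun this (fun n => by push_cast; ring)

lemma hasSum_a_real {r : ℝ} (h0 : 0 ≤ r) (h1 : r < 1) :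
    HasSum (fun n : ℕ => r ^ (n+1)) (r / (1-r)) := by
  have h2 : HasSum (fun n : ℕ => r * r ^ n) (r / (1-r)) := by
    rw [div_eq_mul_inv]
    exact (hasSum_geometric_of_lt_one h0 h1).mul_left r
  exact HasSum.congr_fun h2 (fun n => by ring)

lemma hasSum_b_real (k : ℝ) {r : ℝ} (h0 : 0 < r) (h1 : r < 1) :
    HasSum (fun n : ℕ => k * ((n:ℝ)+1) / ((n:ℝ)+2) * r ^ (n+2))
      (k * (r / (1-r) + Real.log (1-r))) := by
  have hne : (1:ℝ) - r ≠ 0 := by linarith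
  have hgeo : HasSum (fun n : ℕ => r ^ (n+2)) (r^2 * (1-r)⁻¹) := by
    have := (hasSum_geometric_of_lt_one h0.le h1).mul_left (r^2)
    exact HasSum.congr_fun this (fun n => by ring)
  have habs : |r| < 1 := by rw [abs_of_pos h0]; exact h1
  have hlog0 := Real.hasSum_pow_div_log_of_abs_lt_one habs
  have hlog : HasSum (fun n : ℕ => r ^ (n+2) / ((n:ℝ)+2)) (-Real.log (1-r) - r) := by
    have h2 := (hasSum_nat_add_iff' (f := fun n : ℕ => r ^ (n+1) / ((n:ℝ)+1)) 1).mpr hlog0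
    have h3 : -Real.log (1-r) - ∑ i ∈ Finset.range 1, r ^ (i+1) / ((i:ℝ)+1)
        = -Real.log (1-r) - r := by simp
    rw [h3] at h2
    exact HasSum.congr_fun h2 (fun n => by push_cast; ring_nf)
  have hs := (hgeo.mul_left k).sub (hlog.mul_left k)
  have hval : k * (r^2*(1-r)⁻¹) - k * (-Real.log (1-r) - r)
      = k * (r/(1-r) + Real.log (1-r)) := by
    field_simp
    ring
  rw [hval] at hs
  exact HasSum.congr_fun hs (fun n => by
    have hn : ((n:ℝ)+2) ≠ 0 := by positivity
    field_simp
    ring)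

lemma hasDerivAt_F (k : ℝ) {x : ℝ} (hx : x < 1) :
    HasDerivAt (fun r : ℝ => (1+k)*r/(1-r) + k*Real.log (1-r))
      ((1+k*x)/(1-x)^2) x := by
  have hne : (1:ℝ) - x ≠ 0 := by linarith
  have h1 : HasDerivAt (fun r : ℝ => 1 - r) (-1) x := (hasDerivAt_id x).const_sub 1
  have hdiv : HasDerivAt (fun r : ℝ => (1+k)*r/(1-r))
      (((1+k)*1*(1-x) - (1+k)*x*(-1))/(1-x)^2) x :=
    (((hasDerivAt_id x).const_mul (1+k))).div h1 hne
  have hlog : HasDerivAt (fun r : ℝ => k * Real.log (1-r)) (k * ((1-x)⁻¹ * (-1))) x :=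
    ((Real.hasDerivAt_log hne).comp x h1).const_mul k
  have := hdiv.add hlog
  refine this.congr_deriv ?_
  field_simp
  ring

lemma F_strictMono (k : ℝ) (hk0 : 0 ≤ k) {R : ℝ} (hR0 : 0 < R) (hR1 : R < 1) :
    StrictMonoOn (fun r : ℝ => (1+k)*r/(1-r) + k*Real.log (1-r)) (Set.Ico R 1) := by
  refine strictMonoOn_of_deriv_pos (convex_Ico R 1) ?_ ?_
  · intro x hx
    exact (hasDerivAt_F k hx.2).continuousAt.continuousWithinAt
  · intro x hx
    rw [interior_Ico] at hx
    rw [(hasDerivAt_F k hx.2).deriv]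
    have h1 : (0:ℝ) < 1 + k * x := by nlinarith [hx.1, hR0]
    have h2 : (0:ℝ) < (1-x)^2 := by
      have : (1:ℝ) - x ≠ 0 := by linarith [hx.2]
      positivity
    exact div_pos h1 h2

lemma image_phi (φ : ℂ → ℂ) (hφ : ∀ z : ℂ, φ z = (1 - z)⁻¹) :
    φ '' unitDisk = {w : ℂ | 1/2 < w.re} := by
  ext w
  constructor
  · rintro ⟨z, hz, rfl⟩
    have hz1 : ‖z‖ < 1 := mem_unitDisk.mp hz
    have hne := one_sub_ne hz1
    have hsq : z.re^2 + z.im^2 < 1 := by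
      have h1 : Complex.normSq z < 1 := by
        rw [Complex.normSq_eq_norm_sq]
        have : ‖z‖ < 1 := hz1
        nlinarith [norm_nonneg z]
      rwa [Complex.normSq_apply, ← pow_two, ← pow_two] at h1
    rw [mem_setOf_eq, hφ, Complex.inv_re]
    have hpos : 0 < Complex.normSq (1 - z) := Complex.normSq_pos.mpr hne
    have hnsq : Complex.normSq (1 - z) = (1 - z.re)^2 + z.im^2 := by
      rw [Complex.normSq_apply]
      simp [Complex.sub_re, Complex.sub_im]
      ring
    rw [hnsq] at hpos ⊢
    have hre : (1 - z).re = 1 - z.re := by simp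
    rw [hre, lt_div_iff₀ hpos]
    nlinarith
  · intro hw
    rw [mem_setOf_eq] at hw
    have hw0 : w ≠ 0 := by
      intro h; rw [h] at hw; simp at hw; linarith
    have hwsq : 0 < Complex.normSq w := Complex.normSq_pos.mpr hw0
    refine ⟨1 - w⁻¹, ?_, ?_⟩
    · rw [mem_unitDisk]
      have heq : (1:ℂ) - w⁻¹ = (w - 1) * w⁻¹ := by
        field_simp
      rw [heq]
      have hlt : Complex.normSq ((w - 1) * w⁻¹) < 1 := by
        rw [map_mul, Complex.normSq_inv]
        rw [mul_inv_lt_iff₀ hwsq, one_mul]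
        rw [Complex.normSq_apply, Complex.normSq_apply]
        simp [Complex.sub_re, Complex.sub_im]
        nlinarith
      have := Complex.normSq_eq_norm_sq ((w - 1) * w⁻¹)
      have habs : ‖(w - 1) * w⁻¹‖ < 1 := by nlinarith [norm_nonneg ((w - 1) * w⁻¹)]
      exact habs
    · rw [hφ]
      simp

/-- Upper bound for the Bohr radius in the convex case with
`b₁ = 0`: for `φ = h = 1/(1-z)` and `g' = kz h'`, `g(0) = 0`, all the
hypotheses hold, the coefficients are `|aₙ| = 1` and `|bₙ| = k(n-1)/n`, the
Bohr sum equals `(1+k)r/(1-r) + k log(1-r)`, and it exceeds `1/2` for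
`R < r < 1`, where `R` is the root of `2(1+k)R/(1-R) + 2k log(1-R) = 1`. -/
theorem bohr_radius_convex_b1_zero_sharp
    (k : ℝ) (hk : k ∈ Set.Ico (0 : ℝ) 1)
    (φ h g : ℂ → ℂ) (a b : ℕ → ℂ)
    (hφ : ∀ z : ℂ, φ z = (1 - z)⁻¹) (hh : ∀ z : ℂ, h z = (1 - z)⁻¹)
    (hgan : AnalyticOnNhd ℂ g unitDisk) (hg0 : g 0 = 0)
    (hg' : ∀ z ∈ unitDisk, deriv g z = (k : ℂ) * z * deriv h z)
    (ha : ∀ z ∈ unitDisk, HasSum (fun n : ℕ => a n * z ^ n) (h z))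
    (hb : ∀ z ∈ unitDisk, HasSum (fun n : ℕ => b n * z ^ n) (g z))
    (R : ℝ) (hR : R ∈ Set.Ioo (0 : ℝ) 1)
    (hRroot : 2 * (1 + k) * R / (1 - R) + 2 * k * Real.log (1 - R) = 1) :
    Set.InjOn φ unitDisk ∧ Convex ℝ (φ '' unitDisk) ∧
    Subordinate h φ ∧
    (∀ z ∈ unitDisk, ‖deriv g z‖ ≤ k * ‖deriv h z‖) ∧
    deriv g 0 = 0 ∧
    Metric.infDist (φ 0) (frontier (φ '' unitDisk)) = 1 / 2 ∧
    (∀ n : ℕ, 1 ≤ n → ‖a n‖ = 1) ∧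
    (∀ n : ℕ, 2 ≤ n → ‖b n‖ = k * ((n : ℝ) - 1) / n) ∧
    (∀ r : ℝ, r ∈ Set.Ioo (0 : ℝ) 1 →
      (∑' n : ℕ, ‖a (n + 1)‖ * r ^ (n + 1)) +
        (∑' n : ℕ, ‖b (n + 2)‖ * r ^ (n + 2))
        = (1 + k) * r / (1 - r) + k * Real.log (1 - r)) ∧
    (∀ r : ℝ, R < r → r < 1 →
      1 / 2 < (∑' n : ℕ, ‖a (n + 1)‖ * r ^ (n + 1)) +
        (∑' n : ℕ, ‖b (n + 2)‖ * r ^ (n + 2))) := by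

  obtain ⟨hk0, hk1⟩ := hk
  obtain ⟨hR0, hR1⟩ := hR
  have h0mem : (0:ℂ) ∈ unitDisk := by rw [mem_unitDisk]; norm_num
  have himg := image_phi φ hφ
  have hhfun : h = fun z => (1-z)⁻¹ := funext hh
  have hderivh : ∀ z : ℂ, ‖z‖ < 1 → deriv h z = ((1-z)^2)⁻¹ := fun z hz => by
    rw [hhfun]; exact (hasDerivAt_inv_one_sub (one_sub_ne hz)).deriv
  have hacoef : ∀ n, a n = 1 := coeff_unique ha (fun z hz => by
    rw [hh]
    exact HasSum.congr_fun (hasSum_geometric_of_norm_lt_one (mem_unitDisk.mp hz))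
      (fun n => one_mul _))
  have hgG : ∀ z ∈ unitDisk, g z = Gfun k z := by
    intro z hz
    have hdiff : DifferentiableOn ℂ (fun w => g w - Gfun k w) unitDisk := fun w hw =>
      ((hgan w hw).differentiableAt.sub
        (hasDerivAt_G k (mem_unitDisk.mp hw)).differentiableAt).differentiableWithinAt
    have hopen : IsOpen unitDisk := Metric.isOpen_ball
    have hfz : ∀ w ∈ unitDisk, fderivWithin ℂ (fun w => g w - Gfun k w) unitDisk w = 0 := by
      intro w hw
      have hw1 := mem_unitDisk.mp hw
      have hgd : HasDerivAt g ((k:ℂ)*w*((1-w)^2)⁻¹) w := by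
        have hd := (hgan w hw).differentiableAt.hasDerivAt
        rwa [hg' w hw, hderivh w hw1] at hd
      have hd0 : HasDerivAt (fun w => g w - Gfun k w) 0 w := by
        have := hgd.sub (hasDerivAt_G k hw1)
        rw [sub_self] at this
        exact this
      rw [fderivWithin_of_isOpen hopen hw, hd0.hasFDerivAt.fderiv]
      ext x; simp
    have hconv : Convex ℝ unitDisk := convex_ball 0 1
    have hc := hconv.is_const_of_fderivWithin_eq_zero hdiff hfz hz h0mem
    have hG0 : Gfun k 0 = 0 := by simp [Gfun]
    rw [hg0, hG0] at hc
    linear_combination hc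
  have hbcoef : ∀ n : ℕ, b n = (k:ℂ)*((n:ℂ)-1)/(n:ℂ) := coeff_unique hb (fun z hz => by
    rw [hgG z hz]; exact hasSum_Gfun k (mem_unitDisk.mp hz))
  have han : ∀ n : ℕ, ‖a n‖ = 1 := fun n => by rw [hacoef n]; simp
  have hbn : ∀ n : ℕ, 2 ≤ n → ‖b n‖ = k * ((n:ℝ) - 1) / n := by
    intro n hn
    have hn2 : (2:ℝ) ≤ (n:ℝ) := by exact_mod_cast hn
    rw [hbcoef n]
    have hcast : (k:ℂ)*((n:ℂ)-1)/(n:ℂ) = ((k*((n:ℝ)-1)/(n:ℝ) : ℝ) : ℂ) := by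
      push_cast; ring
    rw [hcast, Complex.norm_real, Real.norm_eq_abs, _root_.abs_of_nonneg]
    exact div_nonneg (mul_nonneg hk0 (by linarith)) (by linarith)
  have hsum : ∀ r : ℝ, r ∈ Set.Ioo (0:ℝ) 1 →
      (∑' n : ℕ, ‖a (n + 1)‖ * r ^ (n + 1)) +
        (∑' n : ℕ, ‖b (n + 2)‖ * r ^ (n + 2))
        = (1 + k) * r / (1 - r) + k * Real.log (1 - r) := by
    rintro r ⟨hr0, hr1⟩
    have hne : (1:ℝ) - r ≠ 0 := by linarith
    have hA : HasSum (fun n : ℕ => ‖a (n+1)‖ * r^(n+1)) (r/(1-r)) :=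
      HasSum.congr_fun (hasSum_a_real hr0.le hr1) (fun n => by rw [han]; ring)
    have hB : HasSum (fun n : ℕ => ‖b (n+2)‖ * r^(n+2))
        (k*(r/(1-r) + Real.log (1-r))) :=
      HasSum.congr_fun (hasSum_b_real k hr0 hr1) (fun n => by
        rw [hbn (n+2) (by omega)]; push_cast; ring)
    rw [hA.tsum_eq, hB.tsum_eq]
    field_simp
    ring
  refine ⟨?_, ?_, ?_, ?_, ?_, ?_, fun n _ => han n, hbn, hsum, ?_⟩
  · -- InjOn
    intro z hz w hw heq
    rw [hφ, hφ] at heq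
    have := inv_injective heq
    linear_combination -this
  · -- Convex
    rw [himg]
    exact convex_halfSpace_re_gt _
  · -- Subordinate
    exact ⟨id, analyticOnNhd_id, rfl, Set.mapsTo_id _, fun z _ => by rw [hh, hφ]; rfl⟩
  · -- derivative bound
    intro z hz
    rw [hg' z hz]
    have h1 : ‖(k:ℂ)*z*deriv h z‖ = k*(‖z‖*‖deriv h z‖) := by
      rw [norm_mul, norm_mul, Complex.norm_real, Real.norm_eq_abs, _root_.abs_of_nonneg hk0]
      ring
    rw [h1]
    have hz1 := mem_unitDisk.mp hz
    have h2 : ‖z‖ * ‖deriv h z‖ ≤ ‖deriv h z‖ := by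
      nlinarith [norm_nonneg (deriv h z)]
    exact mul_le_mul_of_nonneg_left h2 hk0
  · -- deriv g 0 = 0
    have := hg' 0 h0mem
    simpa using this
  · -- infDist
    have hphi0 : φ 0 = 1 := by rw [hφ]; simp
    rw [hphi0, himg, Complex.frontier_setOf_lt_re]
    have hmem : ((1/2 : ℝ) : ℂ) ∈ {z : ℂ | z.re = 1/2} := by simp
    apply le_antisymm
    · calc Metric.infDist 1 {z : ℂ | z.re = 1/2} ≤ dist 1 ((1/2 : ℝ) : ℂ) :=
            Metric.infDist_le_dist_of_mem hmem
        _ = 1/2 := by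
            rw [Complex.dist_eq]
            have : (1 : ℂ) - ((1/2 : ℝ) : ℂ) = ((1/2 : ℝ) : ℂ) := by push_cast; ring
            rw [this, Complex.norm_real]
            norm_num
    · by_contra hcon
      push_neg at hcon
      obtain ⟨y, hy, hdy⟩ := (Metric.infDist_lt_iff ⟨_, hmem⟩).mp hcon
      rw [Complex.dist_eq] at hdy
      have h2 : |(1 - y).re| ≤ ‖1 - y‖ := Complex.abs_re_le_norm _
      have h3 : (1 - y).re = 1/2 := by
        simp [Complex.sub_re, hy.out]
        norm_num [hy.out]
      rw [h3] at h2
      rw [_root_.abs_of_nonneg (by norm_num : (0:ℝ) ≤ 1/2)] at h2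
      linarith
  · -- final inequality
    intro r hRr hr1
    have hr0 : 0 < r := lt_trans hR0 hRr
    rw [hsum r ⟨hr0, hr1⟩]
    have hmono := F_strictMono k hk0 hR0 hR1
    have hlt := hmono ⟨le_refl R, hR1⟩ ⟨hRr.le, hr1⟩ hRr
    dsimp only at hlt
    have hneR : (1:ℝ) - R ≠ 0 := by linarith
    have hFR : (1+k)*R/(1-R) + k*Real.log (1-R) = 1/2 := by
      field_simp at hRroot ⊢
      linarith
    linarith
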